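/- arXiv:2302.05069 — 2 statements merged into one kernel-verified Lean document; each statement's English description precedes it below -/
import Mathlib

section
/- If the diagram (A_{0∧1}; A₀, A₁; A_{0∨1}) of complete Boolean algebras with complete embeddings is correct, then A_{0∧1} = A₀ ∩ A₁. -/
/-- The projection onto a complete subalgebra `S`: `h(a) = ∏ {b ∈ S : b ≥ a}`. -/
noncomputable def projSub {B : Type*} [CompleteBooleanAlgebra B] (S : Set B) (a : B) : B :=
  sInf {b | b ∈ S ∧ a ≤ b}

theorem le_projSub {B : Type*} [CompleteBooleanAlgebra B] (S : Set B) (a : B) :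
    a ≤ projSub S a := le_sInf (fun b hb => hb.2)

/-- If the diagram `(A_{0∧1}; A₀, A₁; A_{0∨1})` of complete Boolean algebras (modelled
as complete subalgebras `S01 ⊆ S0, S1` of the ambient algebra `B = A_{0∨1}`) is correct,
then `A_{0∧1} = A₀ ∩ A₁`. -/
theorem stmt10 {B : Type*} [CompleteBooleanAlgebra B] (S01 S0 S1 : Set B)
    (h010 : S01 ⊆ S0) (h011 : S01 ⊆ S1)
    (hinf01 : ∀ T : Set B, T ⊆ S01 → sInf T ∈ S01)
    (hcompl01 : ∀ x ∈ S01, xᶜ ∈ S01)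
    (hinf0 : ∀ T : Set B, T ⊆ S0 → sInf T ∈ S0)
    (hcompl0 : ∀ x ∈ S0, xᶜ ∈ S0)
    (hinf1 : ∀ T : Set B, T ⊆ S1 → sInf T ∈ S1)
    (hcompl1 : ∀ x ∈ S1, xᶜ ∈ S1)
    (hcorrect : ∀ a0 ∈ S0, ∀ a1 ∈ S1,
      projSub S01 a0 ⊓ projSub S01 a1 ≠ ⊥ → a0 ⊓ a1 ≠ ⊥) :
    S01 = S0 ∩ S1 := by
  apply Set.Subset.antisymm
  · exact fun x hx => ⟨h010 hx, h011 hx⟩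
  · rintro a ⟨ha0, ha1⟩
    have hac1 : aᶜ ∈ S1 := hcompl1 a ha1
    have hdisj : projSub S01 a ⊓ projSub S01 aᶜ = ⊥ := by
      by_contra h
      exact hcorrect a ha0 aᶜ hac1 h (by simp)
    have h1 : projSub S01 a ≤ (projSub S01 aᶜ)ᶜ :=
      le_compl_iff_disjoint_right.mpr (disjoint_iff.mpr hdisj)
    have h2 : (projSub S01 aᶜ)ᶜ ≤ a := by
      have := le_projSub S01 aᶜ
      simpa using compl_le_compl this
    have heq : a = projSub S01 a :=
      le_antisymm (le_projSub S01 a) (le_trans h1 h2)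
    rw [heq]
    exact hinf01 _ (fun b hb => hb.1)
end

section
/- Let I be a nice distributive almost-lattice without maximal element, let ℓ ∉ I, and let J = I ∪ {ℓ} with i ≤ ℓ for all i ∈ I. Then Pure(J) = Pure(I) ∪ {(i, ℓ) : i ∈ I \ ker(I)} ∪ {(ℓ, ℓ)}. -/
/-- A distributive almost-lattice. -/
structure DistribAlmostLattice (I : Type*) [SemilatticeInf I] : Prop where
  join_exists : ∀ i j : I, (∃ k, i ≤ k ∧ j ≤ k) → ∃ k, IsLUB {i, j} k
  two_of_three : ∀ i₀ i₁ i₂ : I,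
    (∃ k, i₀ ≤ k ∧ i₁ ≤ k) ∨ (∃ k, i₀ ≤ k ∧ i₂ ≤ k) ∨ (∃ k, i₁ ≤ k ∧ i₂ ≤ k)
  distrib_join : ∀ i j j' a b c : I, IsLUB {i, j} a → IsLUB {i, j'} b →
    IsLUB {i, j ⊓ j'} c → c = a ⊓ b
  distrib_meet : ∀ i j j' a b : I, IsLUB {j, j'} a →
    IsLUB {i ⊓ j, i ⊓ j'} b → b = i ⊓ a
  no_ub_cases : ∀ i j j' : I, ¬ (∃ k, i ≤ k ∧ j ≤ k) →
    ((¬ ∃ k, i ≤ k ∧ j' ≤ k) ∧ ¬ ∃ k, i ≤ k ∧ j ⊓ j' ≤ k) ∨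
    (∃ k, IsLUB {i, j'} k ∧ IsLUB {i, j ⊓ j'} k)
  meet_join_eq : ∀ i j j' : I, ¬ (∃ k, j ≤ k ∧ j' ≤ k) → IsLUB {i ⊓ j, i ⊓ j'} i

/-- Niceness: whenever `i < i'` both lie outside the kernel, there is `j` incomparable
with `i` such that `i' = i ∨ j`. -/
def NiceDAL (I : Type*) [SemilatticeInf I] : Prop :=
  ∀ i i' : I, i < i' → ¬ (∀ j : I, ∃ k, IsLUB {i, j} k) →
    ¬ (∀ j : I, ∃ k, IsLUB {i', j} k) →
    ∃ j : I, (¬ j ≤ i ∧ ¬ i ≤ j) ∧ IsLUB {i, j} i'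

/-- The set of pure pairs: the smallest collection of pairs `i ≤ j` containing all
diagonal pairs, the pairs arising from incomparable elements via meets and joins,
and closed under the interval rule. -/
inductive PurePair {α : Type*} [SemilatticeInf α] : α → α → Prop
  | refl (i : α) : PurePair i i
  | meet_left {i j : α} : ¬ i ≤ j → ¬ j ≤ i → PurePair (i ⊓ j) i
  | meet_right {i j : α} : ¬ i ≤ j → ¬ j ≤ i → PurePair (i ⊓ j) j
  | join_left {i j k : α} : ¬ i ≤ j → ¬ j ≤ i → IsLUB {i, j} k → PurePair i k
  | join_right {i j k : α} : ¬ i ≤ j → ¬ j ≤ i → IsLUB {i, j} k → PurePair j k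
  | interval {i j j' k : α} : i ≤ j → j ≤ j' → j' ≤ k → PurePair i k → PurePair j j'

section Aux

variable {α : Type*} [SemilatticeInf α]

lemma isLUB_pair_iff {β : Type*} [Preorder β] {a b k : β} :
    IsLUB {a, b} k ↔ (a ≤ k ∧ b ≤ k) ∧ ∀ x, a ≤ x → b ≤ x → k ≤ x := by
  constructor
  · rintro ⟨h1, h2⟩
    refine ⟨⟨h1 (Set.mem_insert _ _), h1 (Set.mem_insert_of_mem _ rfl)⟩,
      fun x hx1 hx2 => h2 ?_⟩
    intro y hy
    simp only [Set.mem_insert_iff, Set.mem_singleton_iff] at hy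
    rcases hy with rfl | rfl
    · exact hx1
    · exact hx2
  · rintro ⟨⟨h1, h2⟩, h3⟩
    constructor
    · intro y hy
      simp only [Set.mem_insert_iff, Set.mem_singleton_iff] at hy
      rcases hy with rfl | rfl
      · exact h1
      · exact h2
    · intro x hx
      exact h3 x (hx (Set.mem_insert _ _)) (hx (Set.mem_insert_of_mem _ rfl))

lemma coe_isLUB_coe {a b c : α} :
    IsLUB {(a : WithTop α), (b : WithTop α)} (c : WithTop α) ↔ IsLUB {a, b} c := by
  simp only [isLUB_pair_iff, WithTop.coe_le_coe]
  constructor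
  · rintro ⟨⟨h1, h2⟩, h3⟩
    exact ⟨⟨h1, h2⟩, fun x hx1 hx2 => WithTop.coe_le_coe.mp
      (h3 (x : WithTop α) (WithTop.coe_le_coe.mpr hx1) (WithTop.coe_le_coe.mpr hx2))⟩
  · rintro ⟨⟨h1, h2⟩, h3⟩
    refine ⟨⟨h1, h2⟩, fun x hx1 hx2 => ?_⟩
    induction x using WithTop.recTopCoe with
    | top => exact le_top
    | coe m =>
      exact WithTop.coe_le_coe.mpr
        (h3 m (WithTop.coe_le_coe.mp hx1) (WithTop.coe_le_coe.mp hx2))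

lemma coe_isLUB_top {a b : α} :
    IsLUB {(a : WithTop α), (b : WithTop α)} (⊤ : WithTop α) ↔
      ¬ ∃ k : α, a ≤ k ∧ b ≤ k := by
  rw [isLUB_pair_iff]
  constructor
  · rintro ⟨-, h3⟩ ⟨k, hk1, hk2⟩
    have := h3 (k : WithTop α) (WithTop.coe_le_coe.mpr hk1) (WithTop.coe_le_coe.mpr hk2)
    exact absurd this (by simp)
  · intro hn
    refine ⟨⟨le_top, le_top⟩, fun x hx1 hx2 => ?_⟩
    induction x using WithTop.recTopCoe with
    | top => exact le_rfl
    | coe m =>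
      exact absurd ⟨m, WithTop.coe_le_coe.mp hx1, WithTop.coe_le_coe.mp hx2⟩ hn

lemma purePair_coe {a b : α} (hab : PurePair a b) :
    PurePair (a : WithTop α) (b : WithTop α) := by
  induction hab with
  | refl i => exact PurePair.refl _
  | @meet_left i j hij hji =>
    have : ((i ⊓ j : α) : WithTop α) = (i : WithTop α) ⊓ (j : WithTop α) := by
      simp [WithTop.coe_inf]
    rw [this]
    exact PurePair.meet_left (by simpa using hij) (by simpa using hji)
  | @meet_right i j hij hji =>
    have : ((i ⊓ j : α) : WithTop α) = (i : WithTop α) ⊓ (j : WithTop α) := by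
      simp [WithTop.coe_inf]
    rw [this]
    exact PurePair.meet_right (by simpa using hij) (by simpa using hji)
  | @join_left i j k hij hji hk =>
    exact PurePair.join_left (by simpa using hij) (by simpa using hji)
      (coe_isLUB_coe.mpr hk)
  | @join_right i j k hij hji hk =>
    exact PurePair.join_right (by simpa using hij) (by simpa using hji)
      (coe_isLUB_coe.mpr hk)
  | @interval i j j' k h1 h2 h3 _ IH =>
    exact PurePair.interval (WithTop.coe_le_coe.mpr h1) (WithTop.coe_le_coe.mpr h2)
      (WithTop.coe_le_coe.mpr h3) IH

/-- `ker` complement: there is an element with no common upper bound. -/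
lemma notKer_no_ub (h : DistribAlmostLattice α) {a : α}
    (ha : ¬ (∀ j : α, ∃ k, IsLUB {a, j} k)) :
    ∃ j : α, ¬ ∃ k : α, a ≤ k ∧ j ≤ k := by
  push_neg at ha
  obtain ⟨j, hj⟩ := ha
  refine ⟨j, fun hub => ?_⟩
  obtain ⟨k, hk⟩ := h.join_exists a j hub
  exact hj k hk

lemma notKer_mono (h : DistribAlmostLattice α) {a c : α}
    (ha : ¬ (∀ j : α, ∃ k, IsLUB {a, j} k)) (hac : a ≤ c) :
    ¬ (∀ j : α, ∃ k, IsLUB {c, j} k) := by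
  obtain ⟨j, hj⟩ := notKer_no_ub h ha
  intro hc
  obtain ⟨k, hk⟩ := hc j
  rw [isLUB_pair_iff] at hk
  exact hj ⟨k, hac.trans hk.1.1, hk.1.2⟩

lemma purePair_of_notKer (h : DistribAlmostLattice α) (hnice : NiceDAL α) {a c d : α}
    (ha : ¬ (∀ j : α, ∃ k, IsLUB {a, j} k)) (hac : a ≤ c) (hcd : c ≤ d) :
    PurePair c d := by
  rcases eq_or_lt_of_le hcd with rfl | hlt
  · exact PurePair.refl c
  · obtain ⟨j, ⟨hji, hij⟩, hlub⟩ := hnice c d hlt (notKer_mono h ha hac)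
      (notKer_mono h ha (hac.trans hcd))
    exact PurePair.join_left hij hji hlub

end Aux

/-- Let `I` be a nice distributive almost-lattice without maximal element, and
`J = I ∪ {ℓ}` (modelled as `WithTop I`). Then
`Pure(J) = Pure(I) ∪ {(i,ℓ) : i ∈ I \ ker(I)} ∪ {(ℓ,ℓ)}`. -/
theorem stmt17 {α : Type*} [SemilatticeInf α] (h : DistribAlmostLattice α)
    (hnice : NiceDAL α) (hnomax : ∀ i : α, ∃ j, i < j)
    (p q : WithTop α) :
    PurePair p q ↔
      ((∃ a b : α, p = (a : WithTop α) ∧ q = (b : WithTop α) ∧ PurePair a b) ∨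
       (∃ a : α, p = (a : WithTop α) ∧ q = ⊤ ∧ ¬ (∀ j : α, ∃ k, IsLUB {a, j} k)) ∨
       (p = ⊤ ∧ q = ⊤)) := by
  constructor
  · intro hp
    induction hp with
    | refl i =>
      induction i using WithTop.recTopCoe with
      | top => exact Or.inr (Or.inr ⟨rfl, rfl⟩)
      | coe a => exact Or.inl ⟨a, a, rfl, rfl, PurePair.refl a⟩
    | @meet_left i j hij hji =>
      have hi : i ≠ ⊤ := fun hi => hji (hi ▸ le_top)
      have hj : j ≠ ⊤ := fun hj => hij (hj ▸ le_top)
      obtain ⟨a, rfl⟩ := WithTop.ne_top_iff_exists.mp hi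
      obtain ⟨b, rfl⟩ := WithTop.ne_top_iff_exists.mp hj
      refine Or.inl ⟨a ⊓ b, a, by simp [WithTop.coe_inf], rfl, ?_⟩
      exact PurePair.meet_left (by simpa using hij) (by simpa using hji)
    | @meet_right i j hij hji =>
      have hi : i ≠ ⊤ := fun hi => hji (hi ▸ le_top)
      have hj : j ≠ ⊤ := fun hj => hij (hj ▸ le_top)
      obtain ⟨a, rfl⟩ := WithTop.ne_top_iff_exists.mp hi
      obtain ⟨b, rfl⟩ := WithTop.ne_top_iff_exists.mp hj
      refine Or.inl ⟨a ⊓ b, b, by simp [WithTop.coe_inf], rfl, ?_⟩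
      exact PurePair.meet_right (by simpa using hij) (by simpa using hji)
    | @join_left i j k hij hji hk =>
      have hi : i ≠ ⊤ := fun hi => hji (hi ▸ le_top)
      have hj : j ≠ ⊤ := fun hj => hij (hj ▸ le_top)
      obtain ⟨a, rfl⟩ := WithTop.ne_top_iff_exists.mp hi
      obtain ⟨b, rfl⟩ := WithTop.ne_top_iff_exists.mp hj
      induction k using WithTop.recTopCoe with
      | top =>
        have hnub := coe_isLUB_top.mp hk
        refine Or.inr (Or.inl ⟨a, rfl, rfl, fun hker => ?_⟩)
        obtain ⟨m, hm⟩ := hker b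
        rw [isLUB_pair_iff] at hm
        exact hnub ⟨m, hm.1.1, hm.1.2⟩
      | coe c =>
        exact Or.inl ⟨a, c, rfl, rfl, PurePair.join_left (by simpa using hij)
          (by simpa using hji) (coe_isLUB_coe.mp hk)⟩
    | @join_right i j k hij hji hk =>
      have hi : i ≠ ⊤ := fun hi => hji (hi ▸ le_top)
      have hj : j ≠ ⊤ := fun hj => hij (hj ▸ le_top)
      obtain ⟨a, rfl⟩ := WithTop.ne_top_iff_exists.mp hi
      obtain ⟨b, rfl⟩ := WithTop.ne_top_iff_exists.mp hj
      induction k using WithTop.recTopCoe with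
      | top =>
        have hnub := coe_isLUB_top.mp hk
        refine Or.inr (Or.inl ⟨b, rfl, rfl, fun hker => ?_⟩)
        obtain ⟨m, hm⟩ := hker a
        rw [isLUB_pair_iff] at hm
        exact hnub ⟨m, hm.1.2, hm.1.1⟩
      | coe c =>
        exact Or.inl ⟨b, c, rfl, rfl, PurePair.join_right (by simpa using hij)
          (by simpa using hji) (coe_isLUB_coe.mp hk)⟩
    | @interval i j j' k hij hjj' hj'k _ IH =>
      rcases IH with ⟨a, b, rfl, rfl, hab⟩ | ⟨a, rfl, rfl, ha⟩ | ⟨rfl, rfl⟩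
      · -- i = ↑a, k = ↑b
        have hj' : j' ≠ ⊤ := fun hj' => by
          rw [hj'] at hj'k; exact absurd (top_le_iff.mp hj'k) (by simp)
        obtain ⟨d, rfl⟩ := WithTop.ne_top_iff_exists.mp hj'
        have hj : j ≠ ⊤ := fun hj => by
          rw [hj] at hjj'; exact absurd (top_le_iff.mp hjj') (by simp)
        obtain ⟨c, rfl⟩ := WithTop.ne_top_iff_exists.mp hj
        exact Or.inl ⟨c, d, rfl, rfl, PurePair.interval (WithTop.coe_le_coe.mp hij)
          (WithTop.coe_le_coe.mp hjj') (WithTop.coe_le_coe.mp hj'k) hab⟩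
      · -- i = ↑a, k = ⊤, a ∉ ker
        induction j' using WithTop.recTopCoe with
        | top =>
          induction j using WithTop.recTopCoe with
          | top => exact Or.inr (Or.inr ⟨rfl, rfl⟩)
          | coe c =>
            exact Or.inr (Or.inl ⟨c, rfl, rfl,
              notKer_mono h ha (WithTop.coe_le_coe.mp hij)⟩)
        | coe d =>
          have hj : j ≠ ⊤ := fun hj => by
            rw [hj] at hjj'; exact absurd (top_le_iff.mp hjj') (by simp)
          obtain ⟨c, rfl⟩ := WithTop.ne_top_iff_exists.mp hj
          exact Or.inl ⟨c, d, rfl, rfl, purePair_of_notKer h hnice ha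
            (WithTop.coe_le_coe.mp hij) (WithTop.coe_le_coe.mp hjj')⟩
      · -- i = ⊤
        have hj : j = ⊤ := top_le_iff.mp hij
        subst hj
        have hj' : j' = ⊤ := top_le_iff.mp hjj'
        subst hj'
        exact Or.inr (Or.inr ⟨rfl, rfl⟩)
  · rintro (⟨a, b, rfl, rfl, hab⟩ | ⟨a, rfl, rfl, ha⟩ | ⟨rfl, rfl⟩)
    · exact purePair_coe hab
    · obtain ⟨j, hnub⟩ := notKer_no_ub h ha
      have hij : ¬ a ≤ j := fun hh => hnub ⟨j, hh, le_refl j⟩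
      have hji : ¬ j ≤ a := fun hh => hnub ⟨a, le_refl a, hh⟩
      exact PurePair.join_left (by simpa using hij) (by simpa using hji)
        (coe_isLUB_top.mpr hnub)
    · exact PurePair.refl ⊤
end
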